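/- Let f, g : (0,∞) → ℝ be convex, twice continuously differentiable functions with f(1) = g(1) = 0, f'(1) = g'(1) = 0, f''(1) > 0 and g''(1) > 0. Suppose liminf_{t→0+} g(t)/f(t) > 0 and liminf_{t→∞} g(t)/f(t) > 0 (limits inferior taken in the extended reals). Then there exists β > 0 such that g(t) ≥ β·f(t) for all t ∈ (0,∞). -/

import Mathlib

open Filter Topology

/-- A function with vanishing value and derivative at `1` and positive second derivative on an
interval around `1` is nonnegative on that interval. -/
lemma aux_local_nonneg (h : ℝ → ℝ) (a b : ℝ) (ha : a < 1) (hb : 1 < b)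
    (hd : ∀ x ∈ Set.Ioo a b, DifferentiableAt ℝ h x)
    (hd' : ∀ x ∈ Set.Ioo a b, DifferentiableAt ℝ (deriv h) x)
    (hpos : ∀ x ∈ Set.Ioo a b, 0 < deriv (deriv h) x)
    (h1 : h 1 = 0) (h'1 : deriv h 1 = 0) :
    ∀ x ∈ Set.Ioo a b, 0 ≤ h x := by
  have h1mem : (1:ℝ) ∈ Set.Ioo a b := ⟨ha, hb⟩
  have mono' : StrictMonoOn (deriv h) (Set.Ioo a b) :=
    strictMonoOn_of_deriv_pos (convex_Ioo a b)
      (fun x hx => (hd' x hx).continuousAt.continuousWithinAt)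
      (by rw [interior_Ioo]; exact hpos)
  have monoR : StrictMonoOn h (Set.Ico 1 b) := by
    apply strictMonoOn_of_deriv_pos (convex_Ico 1 b)
      (fun x hx => (hd x ⟨lt_of_lt_of_le ha hx.1, hx.2⟩).continuousAt.continuousWithinAt)
    intro x hx
    rw [interior_Ico] at hx
    have := mono' h1mem ⟨lt_trans ha hx.1, hx.2⟩ hx.1
    rw [h'1] at this
    exact this
  have antiL : StrictAntiOn h (Set.Ioc a 1) := by
    apply strictAntiOn_of_deriv_neg (convex_Ioc a 1)
      (fun x hx => (hd x ⟨hx.1, lt_of_le_of_lt hx.2 hb⟩).continuousAt.continuousWithinAt)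
    intro x hx
    rw [interior_Ioc] at hx
    have := mono' ⟨hx.1, lt_trans hx.2 hb⟩ h1mem hx.2
    rw [h'1] at this
    exact this
  intro x hx
  rcases lt_trichotomy x 1 with hx1 | hx1 | hx1
  · have := antiL ⟨hx.1, le_of_lt hx1⟩ ⟨ha, le_refl 1⟩ hx1
    rw [h1] at this; exact le_of_lt this
  · rw [hx1, h1]
  · have := monoR ⟨le_refl 1, hb⟩ ⟨le_of_lt hx1, hx.2⟩ hx1
    rw [h1] at this; exact le_of_lt this

/-- Propagation of positivity of convex function to the left of a point `a < 1`. -/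
lemma aux_prop_left (u : ℝ → ℝ) (hu : ConvexOn ℝ (Set.Ioi 0) u) (hu1 : u 1 = 0)
    {a t : ℝ} (ha : a < 1) (ht : 0 < t) (hta : t ≤ a) (hua : 0 < u a) : u a ≤ u t := by
  rcases eq_or_lt_of_le hta with rfl | hta
  · exact le_refl _
  · have h1t : t < 1 := lt_trans hta ha
    set μ := (1 - a)/(1 - t) with hμ
    have hμ0 : 0 < μ := div_pos (by linarith) (by linarith)
    have hμ1 : μ ≤ 1 := by
      rw [hμ, div_le_one (by linarith)]; linarith
    have hcv := hu.2 (Set.mem_Ioi.mpr one_pos) (Set.mem_Ioi.mpr ht)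
      (by linarith : (0:ℝ) ≤ 1 - μ) (le_of_lt hμ0) (by ring)
    have hlin : μ * (1 - t) = 1 - a := by
      rw [hμ]; exact div_mul_cancel₀ _ (ne_of_gt (by linarith : (0:ℝ) < 1 - t))
    have hcomb : (1 - μ) • (1:ℝ) + μ • t = a := by
      simp only [smul_eq_mul, mul_one]
      linear_combination -hlin
    rw [hcomb, hu1] at hcv
    simp only [smul_eq_mul, mul_zero, zero_add] at hcv
    have hut : 0 < u t := by
      by_contra hc
      push_neg at hc
      nlinarith
    nlinarith [mul_nonneg (by linarith : (0:ℝ) ≤ 1 - μ) (le_of_lt hut)]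

/-- Propagation of positivity of convex function to the right of a point `a > 1`. -/
lemma aux_prop_right (u : ℝ → ℝ) (hu : ConvexOn ℝ (Set.Ioi 0) u) (hu1 : u 1 = 0)
    {a t : ℝ} (ha : 1 < a) (hta : a ≤ t) (hua : 0 < u a) : u a ≤ u t := by
  rcases eq_or_lt_of_le hta with rfl | hta
  · exact le_refl _
  · have h1t : 1 < t := lt_trans ha hta
    set μ := (a - 1)/(t - 1) with hμ
    have hμ0 : 0 < μ := div_pos (by linarith) (by linarith)
    have hμ1 : μ ≤ 1 := by
      rw [hμ, div_le_one (by linarith)]; linarith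
    have hcv := hu.2 (Set.mem_Ioi.mpr one_pos) (Set.mem_Ioi.mpr (by linarith : (0:ℝ) < t))
      (by linarith : (0:ℝ) ≤ 1 - μ) (le_of_lt hμ0) (by ring)
    have hlin : μ * (t - 1) = a - 1 := by
      rw [hμ]; exact div_mul_cancel₀ _ (ne_of_gt (by linarith : (0:ℝ) < t - 1))
    have hcomb : (1 - μ) • (1:ℝ) + μ • t = a := by
      simp only [smul_eq_mul, mul_one]
      linear_combination hlin
    rw [hcomb, hu1] at hcv
    simp only [smul_eq_mul, mul_zero, zero_add] at hcv
    have hut : 0 < u t := by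
      by_contra hc
      push_neg at hc
      nlinarith
    nlinarith [mul_nonneg (by linarith : (0:ℝ) ≤ 1 - μ) (le_of_lt hut)]

/-- On a compact set where `G` is positive and both functions are continuous, `G` dominates a
positive multiple of `F`. -/
lemma aux_compact_bound (F G : ℝ → ℝ) (K : Set ℝ) (hK : IsCompact K)
    (hFc : ContinuousOn F K) (hGc : ContinuousOn G K)
    (hGpos : ∀ x ∈ K, 0 < G x) :
    ∃ c > (0:ℝ), ∀ x ∈ K, c * F x ≤ G x := by
  rcases K.eq_empty_or_nonempty with rfl | hne
  · exact ⟨1, one_pos, by simp⟩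
  obtain ⟨xM, hxM, hmax⟩ := hK.exists_isMaxOn hne hFc
  obtain ⟨xm, hxm, hmin⟩ := hK.exists_isMinOn hne hGc
  set MF := max (F xM) 1 with hMF
  have hMFpos : (0:ℝ) < MF := lt_of_lt_of_le one_pos (le_max_right _ _)
  have hcpos : 0 < G xm / MF := div_pos (hGpos xm hxm) hMFpos
  refine ⟨G xm / MF, hcpos, fun x hx => ?_⟩
  have h1 : F x ≤ MF := le_trans (hmax hx) (le_max_left _ _)
  have h2 : G xm ≤ G x := hmin hx
  calc G xm / MF * F x ≤ G xm / MF * MF := by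
        exact mul_le_mul_of_nonneg_left h1 (le_of_lt hcpos)
    _ = G xm := div_mul_cancel₀ _ (ne_of_gt hMFpos)
    _ ≤ G x := h2

set_option maxHeartbeats 1000000 in
/-- Under regularity at `1` and positive liminfs of `g/f` at `0+` and `∞`, there is `β > 0`
with `g(t) ≥ β·f(t)` for all `t > 0`. -/
theorem exists_beta_pointwise_bound (f g : ℝ → ℝ)
    (hf : ConvexOn ℝ (Set.Ioi 0) f) (hg : ConvexOn ℝ (Set.Ioi 0) g)
    (hfC2 : ContDiffOn ℝ 2 f (Set.Ioi 0)) (hgC2 : ContDiffOn ℝ 2 g (Set.Ioi 0))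
    (hf1 : f 1 = 0) (hg1 : g 1 = 0)
    (hf'1 : deriv f 1 = 0) (hg'1 : deriv g 1 = 0)
    (hf''1 : 0 < iteratedDeriv 2 f 1) (hg''1 : 0 < iteratedDeriv 2 g 1)
    (hlim0 : (0 : EReal) < liminf (fun t => ((g t / f t : ℝ) : EReal)) (𝓝[>] (0:ℝ)))
    (hlimtop : (0 : EReal) < liminf (fun t => ((g t / f t : ℝ) : EReal)) atTop) :
    ∃ β > (0:ℝ), ∀ t : ℝ, 0 < t → g t ≥ β * f t := by
  have hop : IsOpen (Set.Ioi (0:ℝ)) := isOpen_Ioi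
  have h1mem : (1:ℝ) ∈ Set.Ioi (0:ℝ) := Set.mem_Ioi.mpr one_pos
  -- differentiability infrastructure
  have hfd : ∀ x ∈ Set.Ioi (0:ℝ), DifferentiableAt ℝ f x := fun x hx =>
    ((hfC2.differentiableOn (by norm_num)).differentiableAt (hop.mem_nhds hx))
  have hgd : ∀ x ∈ Set.Ioi (0:ℝ), DifferentiableAt ℝ g x := fun x hx =>
    ((hgC2.differentiableOn (by norm_num)).differentiableAt (hop.mem_nhds hx))
  have hf'C1 : ContDiffOn ℝ 1 (deriv f) (Set.Ioi 0) := hfC2.deriv_of_isOpen hop (by norm_num)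
  have hg'C1 : ContDiffOn ℝ 1 (deriv g) (Set.Ioi 0) := hgC2.deriv_of_isOpen hop (by norm_num)
  have hf'd : ∀ x ∈ Set.Ioi (0:ℝ), DifferentiableAt ℝ (deriv f) x := fun x hx =>
    ((hf'C1.differentiableOn (by norm_num)).differentiableAt (hop.mem_nhds hx))
  have hg'd : ∀ x ∈ Set.Ioi (0:ℝ), DifferentiableAt ℝ (deriv g) x := fun x hx =>
    ((hg'C1.differentiableOn (by norm_num)).differentiableAt (hop.mem_nhds hx))
  set F2 := deriv (deriv f) with hF2def
  set G2 := deriv (deriv g) with hG2def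
  have hF2c : ContinuousOn F2 (Set.Ioi 0) := hf'C1.continuousOn_deriv_of_isOpen hop le_rfl
  have hG2c : ContinuousOn G2 (Set.Ioi 0) := hg'C1.continuousOn_deriv_of_isOpen hop le_rfl
  have hit : ∀ u : ℝ → ℝ, iteratedDeriv 2 u = deriv (deriv u) := by
    intro u
    rw [show (2:ℕ) = 1 + 1 from rfl, iteratedDeriv_succ, iteratedDeriv_one]
  have hF21 : 0 < F2 1 := by rw [hF2def, ← hit f]; exact hf''1
  have hG21 : 0 < G2 1 := by rw [hG2def, ← hit g]; exact hg''1
  set ca := G2 1 / (2 * F2 1) with hca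
  have hcapos : 0 < ca := div_pos hG21 (by linarith)
  set c2 := F2 1 / 4 with hc2
  have hc2pos : 0 < c2 := by rw [hc2]; linarith
  set φ : ℝ → ℝ := fun x => G2 x - ca * F2 x with hφdef
  set ψ : ℝ → ℝ := fun x => F2 x - F2 1 / 2 with hψdef
  have hφ1 : 0 < φ 1 := by
    have : φ 1 = G2 1 / 2 := by
      rw [hφdef]; simp only [hca]; field_simp; ring
    rw [this]; linarith
  have hψ1 : 0 < ψ 1 := by rw [hψdef]; simp; linarith
  have hφcont : ContinuousAt φ 1 :=
    ((hG2c.continuousAt (hop.mem_nhds h1mem)).sub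
      (continuousAt_const.mul (hF2c.continuousAt (hop.mem_nhds h1mem))))
  have hψcont : ContinuousAt ψ 1 :=
    ((hF2c.continuousAt (hop.mem_nhds h1mem)).sub continuousAt_const)
  have hev : ∀ᶠ x in 𝓝 (1:ℝ), 0 < φ x ∧ 0 < ψ x ∧ 0 < x := by
    have e1 : ∀ᶠ x in 𝓝 (1:ℝ), 0 < φ x := hφcont.eventually_mem (Ioi_mem_nhds hφ1)
    have e2 : ∀ᶠ x in 𝓝 (1:ℝ), 0 < ψ x := hψcont.eventually_mem (Ioi_mem_nhds hψ1)
    have e3 : ∀ᶠ x in 𝓝 (1:ℝ), 0 < x := eventually_gt_nhds one_pos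
    filter_upwards [e1, e2, e3] with x h1 h2 h3
    exact ⟨h1, h2, h3⟩
  obtain ⟨r, hr, hrP⟩ := Metric.eventually_nhds_iff.mp hev
  have hmemIoo : ∀ x ∈ Set.Ioo (1 - r) (1 + r), 0 < φ x ∧ 0 < ψ x ∧ 0 < x := by
    intro x hx
    apply hrP
    rw [Real.dist_eq, abs_lt]
    constructor <;> [linarith [hx.1]; linarith [hx.2]]
  have hsubIoi : Set.Ioo (1 - r) (1 + r) ⊆ Set.Ioi (0:ℝ) := fun x hx =>
    Set.mem_Ioi.mpr (hmemIoo x hx).2.2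
  -- the auxiliary functions near 1
  set h1fun : ℝ → ℝ := fun t => g t - ca * f t with hh1def
  set h2fun : ℝ → ℝ := fun t => f t - c2 * (t - 1)^2 with hh2def
  have hq : ∀ x : ℝ, HasDerivAt (fun t : ℝ => (t - 1)^2) (2 * (x - 1)) x := by
    intro x
    have := ((hasDerivAt_id x).sub_const 1).pow 2
    simpa [Pi.pow_def] using this
  have hder1 : Set.EqOn (deriv h1fun) (fun t => deriv g t - ca * deriv f t) (Set.Ioi 0) := by
    intro x hx
    have : HasDerivAt h1fun (deriv g x - ca * deriv f x) x :=
      ((hgd x hx).hasDerivAt).sub (HasDerivAt.const_mul ca ((hfd x hx).hasDerivAt))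
    exact this.deriv
  have hder2 : Set.EqOn (deriv h2fun) (fun t => deriv f t - c2 * (2 * (t - 1))) (Set.Ioi 0) := by
    intro x hx
    have : HasDerivAt h2fun (deriv f x - c2 * (2 * (x - 1))) x :=
      ((hfd x hx).hasDerivAt).sub (HasDerivAt.const_mul c2 (hq x))
    exact this.deriv
  have hd1' : ∀ x ∈ Set.Ioi (0:ℝ), HasDerivAt (deriv h1fun) (φ x) x := by
    intro x hx
    have heq : deriv h1fun =ᶠ[𝓝 x] (fun t => deriv g t - ca * deriv f t) :=
      Filter.eventuallyEq_of_mem (hop.mem_nhds hx) hder1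
    have : HasDerivAt (fun t => deriv g t - ca * deriv f t) (G2 x - ca * F2 x) x :=
      ((hg'd x hx).hasDerivAt).sub (HasDerivAt.const_mul ca ((hf'd x hx).hasDerivAt))
    exact this.congr_of_eventuallyEq heq
  have hd2' : ∀ x ∈ Set.Ioi (0:ℝ), HasDerivAt (deriv h2fun) (ψ x) x := by
    intro x hx
    have heq : deriv h2fun =ᶠ[𝓝 x] (fun t => deriv f t - c2 * (2 * (t - 1))) :=
      Filter.eventuallyEq_of_mem (hop.mem_nhds hx) hder2
    have hlin : HasDerivAt (fun t : ℝ => c2 * (2 * (t - 1))) (c2 * (2 * 1)) x :=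
      HasDerivAt.const_mul c2 (HasDerivAt.const_mul 2 ((hasDerivAt_id x).sub_const 1))
    have : HasDerivAt (fun t => deriv f t - c2 * (2 * (t - 1))) (F2 x - c2 * (2 * 1)) x :=
      ((hf'd x hx).hasDerivAt).sub hlin
    have hval : F2 x - c2 * (2 * 1) = ψ x := by rw [hψdef, hc2]; ring
    rw [hval] at this
    exact this.congr_of_eventuallyEq heq
  -- apply the local lemma
  have hra : 1 - r < 1 := by linarith
  have hrb : 1 < 1 + r := by linarith
  have A1 : ∀ x ∈ Set.Ioo (1 - r) (1 + r), 0 ≤ h1fun x := by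
    apply aux_local_nonneg h1fun (1 - r) (1 + r) hra hrb
    · intro x hx
      exact ((hgd x (hsubIoi hx)).sub ((hfd x (hsubIoi hx)).const_mul ca))
    · intro x hx
      exact (hd1' x (hsubIoi hx)).differentiableAt
    · intro x hx
      rw [(hd1' x (hsubIoi hx)).deriv]
      exact (hmemIoo x hx).1
    · rw [hh1def]; simp [hf1, hg1]
    · rw [hder1 h1mem]; simp [hf'1, hg'1]
  have A2 : ∀ x ∈ Set.Ioo (1 - r) (1 + r), 0 ≤ h2fun x := by
    apply aux_local_nonneg h2fun (1 - r) (1 + r) hra hrb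
    · intro x hx
      exact ((hfd x (hsubIoi hx)).sub (((hq x).differentiableAt).const_mul c2))
    · intro x hx
      exact (hd2' x (hsubIoi hx)).differentiableAt
    · intro x hx
      rw [(hd2' x (hsubIoi hx)).deriv]
      exact (hmemIoo x hx).2.1
    · rw [hh2def]; simp [hf1]
    · rw [hder2 h1mem]; simp [hf'1]
  -- the points p⁻ and p⁺
  set pl := 1 - r / 2 with hpl
  set pr := 1 + r / 2 with hpr
  have hplmem : pl ∈ Set.Ioo (1 - r) (1 + r) := ⟨by rw [hpl]; linarith, by rw [hpl]; linarith⟩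
  have hprmem : pr ∈ Set.Ioo (1 - r) (1 + r) := ⟨by rw [hpr]; linarith, by rw [hpr]; linarith⟩
  have hplpos : 0 < pl := (hmemIoo pl hplmem).2.2
  have hprpos : 0 < pr := (hmemIoo pr hprmem).2.2
  have hpl1 : pl < 1 := by rw [hpl]; linarith
  have hpr1 : 1 < pr := by rw [hpr]; linarith
  have hfpl : 0 < f pl := by
    have h := A2 pl hplmem
    simp only [hh2def] at h
    have hsq : (pl - 1)^2 = (r/2)^2 := by rw [hpl]; ring
    rw [hsq] at h
    nlinarith [mul_pos hc2pos (pow_pos (half_pos hr) 2)]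
  have hfpr : 0 < f pr := by
    have h := A2 pr hprmem
    simp only [hh2def] at h
    have hsq : (pr - 1)^2 = (r/2)^2 := by rw [hpr]; ring
    rw [hsq] at h
    nlinarith [mul_pos hc2pos (pow_pos (half_pos hr) 2)]
  have hgpl : 0 < g pl := by
    have h := A1 pl hplmem
    simp only [hh1def] at h
    nlinarith [mul_pos hcapos hfpl]
  have hgpr : 0 < g pr := by
    have h := A1 pr hprmem
    simp only [hh1def] at h
    nlinarith [mul_pos hcapos hfpr]
  -- positivity of f and g away from 1
  have hfleft : ∀ t : ℝ, 0 < t → t ≤ pl → 0 < f t := fun t ht hle =>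
    lt_of_lt_of_le hfpl (aux_prop_left f hf hf1 hpl1 ht hle hfpl)
  have hfright : ∀ t : ℝ, pr ≤ t → 0 < f t := fun t hle =>
    lt_of_lt_of_le hfpr (aux_prop_right f hf hf1 hpr1 hle hfpr)
  have hgleft : ∀ t : ℝ, 0 < t → t ≤ pl → 0 < g t := fun t ht hle =>
    lt_of_lt_of_le hgpl (aux_prop_left g hg hg1 hpl1 ht hle hgpl)
  have hgright : ∀ t : ℝ, pr ≤ t → 0 < g t := fun t hle =>
    lt_of_lt_of_le hgpr (aux_prop_right g hg hg1 hpr1 hle hgpr)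
  -- tail at 0⁺
  obtain ⟨c0, hc00, hc0l⟩ := EReal.exists_between_coe_real hlim0
  have hc0pos : (0:ℝ) < c0 := by exact_mod_cast hc00
  have hev0 : ∀ᶠ t in 𝓝[>] (0:ℝ), c0 < g t / f t := by
    have := eventually_lt_of_lt_liminf hc0l
    filter_upwards [this] with t ht
    exact_mod_cast ht
  obtain ⟨δ, hδmem, hδsub⟩ := mem_nhdsGT_iff_exists_Ioo_subset.mp hev0
  have hδpos : (0:ℝ) < δ := hδmem
  -- tail at ∞
  obtain ⟨ci, hci0, hcil⟩ := EReal.exists_between_coe_real hlimtop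
  have hcipos : (0:ℝ) < ci := by exact_mod_cast hci0
  have hevi : ∀ᶠ t in atTop, ci < g t / f t := by
    have := eventually_lt_of_lt_liminf hcil
    filter_upwards [this] with t ht
    exact_mod_cast ht
  obtain ⟨M, hM⟩ := eventually_atTop.mp hevi
  -- middle compacts
  set δ' := min δ pl with hδ'
  have hδ'pos : 0 < δ' := lt_min hδpos hplpos
  have hδ'pl : δ' ≤ pl := min_le_right _ _
  set M' := max M pr with hM'
  have hM'pr : pr ≤ M' := le_max_right _ _
  have hK1 : Set.Icc δ' pl ⊆ Set.Ioi (0:ℝ) := fun x hx =>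
    Set.mem_Ioi.mpr (lt_of_lt_of_le hδ'pos hx.1)
  have hK2 : Set.Icc pr M' ⊆ Set.Ioi (0:ℝ) := fun x hx =>
    Set.mem_Ioi.mpr (lt_of_lt_of_le hprpos hx.1)
  obtain ⟨k1, hk1pos, hk1⟩ := aux_compact_bound f g (Set.Icc δ' pl) isCompact_Icc
    ((hfC2.continuousOn).mono hK1) ((hgC2.continuousOn).mono hK1)
    (fun x hx => hgleft x (lt_of_lt_of_le hδ'pos hx.1) hx.2)
  obtain ⟨k2, hk2pos, hk2⟩ := aux_compact_bound f g (Set.Icc pr M') isCompact_Icc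
    ((hfC2.continuousOn).mono hK2) ((hgC2.continuousOn).mono hK2)
    (fun x hx => hgright x hx.1)
  -- assemble β
  set β := min (min ca c0) (min ci (min k1 k2)) with hβ
  have hβpos : 0 < β := lt_min (lt_min hcapos hc0pos) (lt_min hcipos (lt_min hk1pos hk2pos))
  have hβca : β ≤ ca := le_trans (min_le_left _ _) (min_le_left _ _)
  have hβc0 : β ≤ c0 := le_trans (min_le_left _ _) (min_le_right _ _)
  have hβci : β ≤ ci := le_trans (min_le_right _ _) (min_le_left _ _)
  have hβk1 : β ≤ k1 := le_trans (min_le_right _ _) (le_trans (min_le_right _ _) (min_le_left _ _))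
  have hβk2 : β ≤ k2 := le_trans (min_le_right _ _) (le_trans (min_le_right _ _) (min_le_right _ _))
  refine ⟨β, hβpos, fun t ht => ?_⟩
  rcases lt_or_ge t δ' with hcase1 | hcase1
  · -- 0 < t < δ' : tail at 0
    have htδ : t ∈ Set.Ioo (0:ℝ) δ := ⟨ht, lt_of_lt_of_le hcase1 (min_le_left _ _)⟩
    have hgt : c0 < g t / f t := hδsub htδ
    have hft : 0 < f t := hfleft t ht (le_of_lt (lt_of_lt_of_le hcase1 hδ'pl))
    have h1 : c0 * f t < g t := (lt_div_iff₀ hft).mp hgt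
    have h2 : β * f t ≤ c0 * f t := mul_le_mul_of_nonneg_right hβc0 (le_of_lt hft)
    linarith
  rcases le_or_gt t pl with hcase2 | hcase2
  · -- δ' ≤ t ≤ pl : left compact
    have h1 := hk1 t ⟨hcase1, hcase2⟩
    have hft : 0 < f t := hfleft t ht hcase2
    have h2 : β * f t ≤ k1 * f t := mul_le_mul_of_nonneg_right hβk1 (le_of_lt hft)
    linarith
  rcases lt_or_ge t pr with hcase3 | hcase3
  · -- pl < t < pr : local region
    have htmem : t ∈ Set.Ioo (1 - r) (1 + r) := by
      constructor
      · have := hplmem.1; linarith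
      · have := hprmem.2; linarith
    have h1 := A1 t htmem
    simp only [hh1def] at h1
    have h2 := A2 t htmem
    simp only [hh2def] at h2
    have hftnn : 0 ≤ f t := by nlinarith [sq_nonneg (t - 1)]
    have h3 : β * f t ≤ ca * f t := mul_le_mul_of_nonneg_right hβca hftnn
    linarith
  rcases le_or_gt t M' with hcase4 | hcase4
  · -- pr ≤ t ≤ M' : right compact
    have h1 := hk2 t ⟨hcase3, hcase4⟩
    have hft : 0 < f t := hfright t hcase3
    have h2 : β * f t ≤ k2 * f t := mul_le_mul_of_nonneg_right hβk2 (le_of_lt hft)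
    linarith
  · -- M' < t : tail at ∞
    have hgt : ci < g t / f t := hM t (le_trans (le_max_left _ _) (le_of_lt hcase4))
    have hft : 0 < f t := hfright t (le_trans hM'pr (le_of_lt hcase4))
    have h1 : ci * f t < g t := (lt_div_iff₀ hft).mp hgt
    have h2 : β * f t ≤ ci * f t := mul_le_mul_of_nonneg_right hβci (le_of_lt hft)
    linarith
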